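/- Let G be a d-regular digraph on N ≥ 2 vertices and (G,A_G) a bandwidth optimal allgather algorithm. Then for every n ≥ 1, the Cartesian power algorithm (G^{□n}, A_{G^{□n}}) is a bandwidth optimal allgather algorithm on N^n nodes. -/

import Mathlib

open MeasureTheory

namespace Collective

/-- A communication tuple `((w,C),(u,v),t)`. -/
abbrev Tup (V : Type*) := V × Set ℝ × (V × V) × ℕ

/-- A schedule is a set of communication tuples. -/
abbrev Sched (V : Type*) := Set (Tup V)

/-- The data shard, identified with the interval `[0,1)`. -/
def shard : Set ℝ := Set.Ico (0 : ℝ) 1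

/-- `A` is a valid (finite) schedule on the digraph with edge relation `E`:
every tuple uses an edge, its chunk is a measurable subset of the shard, and
its communication step is at least `1`. -/
def IsSched {V : Type*} (E : V → V → Prop) (A : Sched V) : Prop :=
  A.Finite ∧ ∀ p ∈ A, E p.2.2.1.1 p.2.2.1.2 ∧ p.2.1 ⊆ shard ∧
    MeasurableSet p.2.1 ∧ 1 ≤ p.2.2.2

/-- The maximum communication step occurring in a schedule. -/
noncomputable def tmax {V : Type*} (A : Sched V) : ℕ :=
  sSup {t | ∃ p ∈ A, p.2.2.2 = t}

/-- `A` is a reduce-scatter schedule. -/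
def IsReduceScatter {V : Type*} (A : Sched V) : Prop :=
  ∀ u v : V, u ≠ v → ∀ x ∈ shard,
    ∃ (m : ℕ) (w : Fin (m + 1) → V) (C : Fin m → Set ℝ) (t : Fin m → ℕ),
      w 0 = u ∧ w (Fin.last m) = v ∧ StrictMono t ∧
      ∀ i : Fin m, (v, C i, (w i.castSucc, w i.succ), t i) ∈ A ∧ x ∈ C i

/-- `A` is an allgather schedule. -/
def IsAllgather {V : Type*} (A : Sched V) : Prop :=
  ∀ u v : V, u ≠ v → ∀ x ∈ shard,
    ∃ (m : ℕ) (w : Fin (m + 1) → V) (C : Fin m → Set ℝ) (t : Fin m → ℕ),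
      w 0 = u ∧ w (Fin.last m) = v ∧ StrictMono t ∧
      ∀ i : Fin m, (u, C i, (w i.castSucc, w i.succ), t i) ∈ A ∧ x ∈ C i

/-- A digraph is `d`-regular if every vertex has out-degree `d` and in-degree `d`. -/
def IsRegular {V : Type*} (E : V → V → Prop) (d : ℕ) : Prop :=
  ∀ v : V, {w | E v w}.ncard = d ∧ {w | E w v}.ncard = d

/-- Node latency `T_L(A) = t_max · α`. -/
noncomputable def latT {V : Type*} (α : ℝ) (A : Sched V) : ℝ := (tmax A : ℝ) * α

/-- Total chunk length sent over edge `e` at step `t`. -/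
noncomputable def edgeLoad {V : Type*} (A : Sched V) (e : V × V) (t : ℕ) : ℝ :=
  ∑ᶠ p ∈ {p : Tup V | p ∈ A ∧ p.2.2.1 = e ∧ p.2.2.2 = t}, (volume p.2.1).toReal

/-- Bandwidth runtime of step `t`:
`T_B(A_t,M,B) = (d/B)·(M/N)·max_{(u,v)∈E} Σ_{((w,C),(u,v),t)∈A_t} |C|`. -/
noncomputable def stepT {V : Type*} (E : V → V → Prop) (d : ℕ) (M B : ℝ)
    (A : Sched V) (t : ℕ) : ℝ :=
  ((d : ℝ) / B) * (M / (Nat.card V : ℝ)) *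
    sSup ((fun e => edgeLoad A e t) '' {e : V × V | E e.1 e.2})

/-- Bandwidth runtime `T_B(A,M,B) = Σ_{t=1}^{t_max} T_B(A_t,M,B)`. -/
noncomputable def bwT {V : Type*} (E : V → V → Prop) (d : ℕ) (M B : ℝ)
    (A : Sched V) : ℝ :=
  ∑ t ∈ Finset.Icc 1 (tmax A), stepT E d M B A t

/-- There is a directed walk of length `n` from `u` to `v`. -/
def HasWalk {V : Type*} (E : V → V → Prop) (u v : V) (n : ℕ) : Prop :=
  ∃ w : Fin (n + 1) → V, w 0 = u ∧ w (Fin.last n) = v ∧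
    ∀ i : Fin n, E (w i.castSucc) (w i.succ)

/-- Strong connectivity. -/
def StronglyConnected {V : Type*} (E : V → V → Prop) : Prop :=
  ∀ u v : V, ∃ n, HasWalk E u v n

/-- Directed graph distance: the length of a shortest directed walk. -/
noncomputable def dist {V : Type*} (E : V → V → Prop) (u v : V) : ℕ :=
  sInf {n | HasWalk E u v n}

/-- Diameter `D(G) = max_{u,v} d(u,v)`. -/
noncomputable def diam {V : Type*} (E : V → V → Prop) : ℕ :=
  sSup {n | ∃ u v : V, dist E u v = n}

/-- `A` is a shortest-path (reduce-scatter style) schedule: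
`((v,C),(u,w),t) ∈ A` iff `d(u,v) = d(w,v)+1 = D(G)+1−t`. -/
def IsShortestPathSched {V : Type*} (E : V → V → Prop) (A : Sched V) : Prop :=
  (∀ (v : V) (C : Set ℝ) (u w : V) (t : ℕ), (v, C, (u, w), t) ∈ A →
      dist E u v = dist E w v + 1 ∧ dist E u v + t = diam E + 1) ∧
  (∀ (v u w : V) (t : ℕ), E u w → dist E u v = dist E w v + 1 →
      dist E u v + t = diam E + 1 → ∃ C : Set ℝ, (v, C, (u, w), t) ∈ A)

/-- The transpose digraph. -/
def transpose {V : Type*} (E : V → V → Prop) : V → V → Prop := fun u v => E v u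

/-- The reverse schedule `A^T`: `((w,C),(v,u),t_max−t+1) ∈ A^T` iff `((w,C),(u,v),t) ∈ A`. -/
noncomputable def reverseSched {V : Type*} (A : Sched V) : Sched V :=
  (fun q : Tup V => (q.1, q.2.1, (q.2.2.1.2, q.2.2.1.1), tmax A + 1 - q.2.2.2)) '' A

/-- The schedule obtained by relabeling vertices along `f`. -/
def mapSched {V : Type*} (f : V ≃ V) (A : Sched V) : Sched V :=
  (fun q : Tup V => (f q.1, q.2.1, (f q.2.2.1.1, f q.2.2.1.2), q.2.2.2)) '' A

/-- The vertex set of the line graph `L(G)`: the edges of `G`. -/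
def lineV {V : Type*} (E : V → V → Prop) : Type _ := {e : V × V // E e.1 e.2}

/-- The edge relation of the line graph: `uu' → vv'` iff `u' = v`. -/
def lineE {V : Type*} (E : V → V → Prop) : lineV E → lineV E → Prop :=
  fun e f => e.1.2 = f.1.1

/-- The line-graph-expanded schedule `A_{L(G)}`. -/
noncomputable def lineSched {V : Type*} (E : V → V → Prop) (A : Sched V) :
    Sched (lineV E) :=
  {p | (∃ (v v' w u u' : V) (C : Set ℝ) (t : ℕ)
          (hvv' : E v v') (hwu : E w u) (huu' : E u u'),
          (v, C, (u, u'), t) ∈ A ∧ (v, v') ≠ (w, u) ∧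
          p = (⟨(v, v'), hvv'⟩, C, (⟨(w, u), hwu⟩, ⟨(u, u'), huu'⟩), t))
     ∨ (∃ (u v v' : V) (huv : E u v) (hvv' : E v v'),
          (u, v) ≠ (v, v') ∧
          p = (⟨(v, v'), hvv'⟩, shard, (⟨(u, v), huv⟩, ⟨(v, v'), hvv'⟩), tmax A + 1))}

/-- A digraph bundled with a schedule, used to iterate line graph expansion. -/
structure Alg : Type 1 where
  V : Type
  E : V → V → Prop
  A : Sched V

/-- One application of line graph expansion to a bundled algorithm. -/
noncomputable def lineAlg (G : Alg) : Alg :=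
  ⟨lineV G.E, lineE G.E, lineSched G.E G.A⟩

/-- The degree-expanded digraph `G*n`. -/
def degE {V : Type*} (E : V → V → Prop) (n : ℕ) :
    (V × Fin n) → (V × Fin n) → Prop :=
  fun a b => E a.1 b.1

/-- The degree-expanded schedule `A_{G*n}`, relative to an enumeration `enum` of the
out-edges of each vertex of `G*n`. -/
noncomputable def degSched {V : Type*} (A : Sched V) (n d : ℕ)
    (enum : V × Fin n → Fin (n * d) → V × Fin n) : Sched (V × Fin n) :=
  {p | (∃ (u : V) (i j : Fin n) (β : Fin (n * d)), i ≠ j ∧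
          p = ((u, j),
               Set.Ico (((β : ℕ) : ℝ) / ((n : ℝ) * (d : ℝ)))
                 ((((β : ℕ) : ℝ) + 1) / ((n : ℝ) * (d : ℝ))),
               ((u, i), enum (u, i) β), 1))
     ∨ (∃ (w u v : V) (C : Set ℝ) (t : ℕ) (i j : Fin n),
          (w, C, (u, v), t) ∈ A ∧ p = ((w, j), C, ((u, i), (v, j)), t + 1))}

/-- The edge relation of the Cartesian power `G^{□n}`. -/
def powE {V : Type*} (E : V → V → Prop) (n : ℕ) :
    (Fin n → V) → (Fin n → V) → Prop :=
  fun u v => ∃ j : Fin n, E (u j) (v j) ∧ ∀ k : Fin n, k ≠ j → u k = v k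

/-- Cyclic rotation of coordinates by `i`. -/
def rot {V : Type*} {n : ℕ} (i : Fin n) (v : Fin n → V) : Fin n → V :=
  fun k => v (k - i)

/-- The Cartesian power allgather schedule `A_{G^{□n}}`: the `i`-th of the `n` schedules
`A^{(i)}` (a coordinate rotation of `A^{(1)}`) is run on the `i`-th equal subshard. -/
noncomputable def powSched {V : Type*} (A : Sched V) (n : ℕ) : Sched (Fin n → V) :=
  {p | ∃ (i j : Fin n) (w u v : V) (C : Set ℝ) (t : ℕ) (a b : Fin n → V),
        (w, C, (u, v), t) ∈ A ∧ a j = w ∧ b j = u ∧ (∀ k : Fin n, j < k → a k = b k) ∧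
        p = (rot i a, (fun x : ℝ => (((i : ℕ) : ℝ) + x) / (n : ℝ)) '' C,
             (rot i b, rot i (Function.update b j v)), t + (j : ℕ) * tmax A)}

/-- The edge relation of the Cartesian product `G₁□⋯□G_n` of a family of digraphs. -/
def boxE {n : ℕ} {V : Fin n → Type*} (E : ∀ i, V i → V i → Prop) :
    (∀ i, V i) → (∀ i, V i) → Prop :=
  fun u v => ∃ j : Fin n, E j (u j) (v j) ∧ ∀ k : Fin n, k ≠ j → u k = v k

/-- The generalized Kautz digraph `Π_{d,m}` on `ℤ/mℤ`:
`x → y` iff `y ≡ −d·x − a (mod m)` for some `a ∈ {1,…,d}`. -/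
def kautzE (d m : ℕ) : ZMod m → ZMod m → Prop :=
  fun x y => ∃ a : ℕ, 1 ≤ a ∧ a ≤ d ∧ y = -(d : ZMod m) * x - (a : ZMod m)

end Collective
namespace Collective

open Pointwise ENNReal

section Aux
variable {V : Type*}

lemma time_le_tmax {A : Sched V} (hfin : A.Finite) {p : Tup V} (hp : p ∈ A) :
    p.2.2.2 ≤ tmax A := by
  refine le_csSup ?_ ⟨p, hp, rfl⟩
  have : {t | ∃ p ∈ A, p.2.2.2 = t} = (fun p : Tup V => p.2.2.2) '' A := by
    ext t; simp [Set.mem_image]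
  rw [this]
  exact (hfin.image _).bddAbove

lemma exists_time_eq_tmax {A : Sched V} (hfin : A.Finite) (hne : A.Nonempty) :
    ∃ p ∈ A, p.2.2.2 = tmax A := by
  have hmem : tmax A ∈ {t | ∃ p ∈ A, p.2.2.2 = t} := by
    refine Nat.sSup_mem ?_ ?_
    · obtain ⟨p, hp⟩ := hne; exact ⟨_, p, hp, rfl⟩
    · have : {t | ∃ p ∈ A, p.2.2.2 = t} = (fun p : Tup V => p.2.2.2) '' A := by
        ext t; simp [Set.mem_image]
      rw [this]; exact (hfin.image _).bddAbove
  exact hmem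

/-- A time-windowed walk carrying data `x` with root `u` inside schedule `A`. -/
def PathIn (A : Sched V) (u : V) (x : ℝ) (a b : V) (S T : ℕ) : Prop :=
  ∃ (m : ℕ) (w : ℕ → V) (C : ℕ → Set ℝ) (t : ℕ → ℕ),
    w 0 = a ∧ w m = b ∧ (∀ i j, i < j → j < m → t i < t j) ∧
    ∀ i, i < m → (u, C i, (w i, w (i + 1)), t i) ∈ A ∧ x ∈ C i ∧ S ≤ t i ∧ t i ≤ T

lemma PathIn.refl {A : Sched V} (u : V) (x : ℝ) (a : V) (S T : ℕ) :
    PathIn A u x a a S T :=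
  ⟨0, fun _ => a, fun _ => ∅, fun _ => 0, rfl, rfl, fun _ _ _ h => absurd h (Nat.not_lt_zero _),
    fun _ h => absurd h (Nat.not_lt_zero _)⟩

lemma PathIn.trans {A : Sched V} {u : V} {x : ℝ} {a b c : V} {S T S' T' : ℕ}
    (h1 : PathIn A u x a b S T) (h2 : PathIn A u x b c S' T') (hTT : T < S')
    (hST : S ≤ S') (hTT' : T ≤ T') :
    PathIn A u x a c S T' := by
  obtain ⟨m1, w1, C1, t1, hw10, hw1l, ht1, hs1⟩ := h1
  obtain ⟨m2, w2, C2, t2, hw20, hw2l, ht2, hs2⟩ := h2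
  refine ⟨m1 + m2,
    fun k => if k ≤ m1 then w1 k else w2 (k - m1),
    fun k => if k < m1 then C1 k else C2 (k - m1),
    fun k => if k < m1 then t1 k else t2 (k - m1),
    by simpa using hw10, ?_, ?_, ?_⟩
  · dsimp only
    by_cases h : m2 = 0
    · subst h
      simp only [Nat.add_zero, le_refl, if_pos]
      rw [hw1l, ← hw2l, hw20]
    · rw [if_neg (by omega : ¬ (m1 + m2 ≤ m1))]
      rw [← hw2l]; congr 1; omega
  · intro i j hij hj
    dsimp only
    by_cases hi : i < m1 <;> by_cases hjm : j < m1
    · rw [if_pos hi, if_pos hjm]; exact ht1 i j hij (by omega)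
    · rw [if_pos hi, if_neg hjm]
      have h1 := (hs1 i hi).2.2.2
      have h2 := (hs2 (j - m1) (by omega)).2.2.1
      omega
    · omega
    · rw [if_neg hi, if_neg hjm]
      exact ht2 (i - m1) (j - m1) (by omega) (by omega)
  · intro i hi
    dsimp only
    by_cases h : i < m1
    · rw [if_pos h, if_pos h, if_pos (by omega : i ≤ m1), if_pos (by omega : i + 1 ≤ m1)]
      obtain ⟨hm, hx, hl, hr⟩ := hs1 i h
      exact ⟨hm, hx, hl, by omega⟩
    · have hi2 : i - m1 < m2 := by omega
      rw [if_neg h, if_neg h]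
      obtain ⟨hm, hx, hl, hr⟩ := hs2 (i - m1) hi2
      have e1 : (if i ≤ m1 then w1 i else w2 (i - m1)) = w2 (i - m1) := by
        by_cases hh : i ≤ m1
        · rw [if_pos hh]
          have : i = m1 := by omega
          subst this
          rw [hw1l, ← hw20]; congr 1; omega
        · rw [if_neg hh]
      have e2 : (if i + 1 ≤ m1 then w1 (i + 1) else w2 (i + 1 - m1)) = w2 (i - m1 + 1) := by
        rw [if_neg (by omega)]; congr 1; omega
      rw [e1, e2]
      exact ⟨hm, hx, by omega, hr⟩

/-- Convert a `PathIn` into the `Fin`-indexed form demanded by `IsAllgather`. -/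
lemma PathIn.toWalk {A : Sched V} {u : V} {x : ℝ} {a b : V} {S T : ℕ}
    (h : PathIn A u x a b S T) :
    ∃ (m : ℕ) (w : Fin (m + 1) → V) (C : Fin m → Set ℝ) (t : Fin m → ℕ),
      w 0 = a ∧ w (Fin.last m) = b ∧ StrictMono t ∧
      ∀ i : Fin m, (u, C i, (w i.castSucc, w i.succ), t i) ∈ A ∧ x ∈ C i := by
  obtain ⟨m, w, C, t, hw0, hwl, ht, hs⟩ := h
  refine ⟨m, fun i => w i, fun i => C i, fun i => t i, hw0, hwl, ?_, ?_⟩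
  · intro i j hij
    exact ht i j (by rwa [Fin.lt_def] at hij) j.isLt
  · intro i
    obtain ⟨hm, hx, _, _⟩ := hs i i.isLt
    exact ⟨by simpa using hm, hx⟩

/-- Convert an `IsAllgather` walk into a `PathIn` with window `[1, tmax A]`. -/
lemma pathIn_of_allgather {E : V → V → Prop} {A : Sched V} (hA : IsSched E A)
    (hAG : IsAllgather A) {u v : V} (huv : u ≠ v) {x : ℝ} (hx : x ∈ shard) :
    PathIn A u x u v 1 (tmax A) := by
  obtain ⟨m, w, C, t, hw0, hwl, ht, hs⟩ := hAG u v huv x hx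
  refine ⟨m, fun k => if h : k ≤ m then w ⟨k, by omega⟩ else v,
    fun k => if h : k < m then C ⟨k, h⟩ else ∅,
    fun k => if h : k < m then t ⟨k, h⟩ else 0, ?_, ?_, ?_, ?_⟩
  · dsimp only; rw [dif_pos (Nat.zero_le m), ← hw0]; rfl
  · dsimp only; rw [dif_pos (le_refl m), ← hwl]; rfl
  · intro i j hij hj
    dsimp only
    rw [dif_pos (by omega : i < m), dif_pos hj]
    exact ht (by rwa [Fin.lt_def] : (⟨i, by omega⟩ : Fin m) < ⟨j, hj⟩)
  · intro i hi
    dsimp only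
    rw [dif_pos hi, dif_pos hi, dif_pos (by omega : i ≤ m), dif_pos (by omega : i + 1 ≤ m)]
    obtain ⟨hm, hx'⟩ := hs ⟨i, hi⟩
    refine ⟨?_, hx', (hA.2 _ hm).2.2.2, time_le_tmax hA.1 hm⟩
    convert hm using 4 <;> · congr 1


lemma fin_sub_add_cancel {n : ℕ} (a b : Fin n) : a - b + b = a := by
  ext
  simp only [Fin.sub_def, Fin.add_def, Nat.mod_add_mod]
  have h1 : n - ↑b + ↑a + ↑b = ↑a + n := by have := b.isLt; omega
  rw [h1, Nat.add_mod_right, Nat.mod_eq_of_lt a.isLt]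

lemma fin_add_sub_cancel {n : ℕ} (a b : Fin n) : a + b - b = a := by
  ext
  simp only [Fin.sub_def, Fin.add_def, Nat.add_mod_mod]
  have h1 : n - ↑b + (↑a + ↑b) = ↑a + n := by have := b.isLt; omega
  rw [h1, Nat.add_mod_right, Nat.mod_eq_of_lt a.isLt]

lemma rot_unrot {n : ℕ} (i : Fin n) (s : Fin n → V) :
    rot i (fun k => s (k + i)) = s := by
  funext k
  show s (k - i + i) = s k
  rw [fin_sub_add_cancel]

lemma PathIn.mono {A : Sched V} {u : V} {x : ℝ} {a b : V} {S T S' T' : ℕ}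
    (h : PathIn A u x a b S T) (hS : S' ≤ S) (hT : T ≤ T') : PathIn A u x a b S' T' := by
  obtain ⟨m, w, C, t, hw0, hwl, ht, hs⟩ := h
  exact ⟨m, w, C, t, hw0, hwl, ht, fun i hi =>
    ⟨(hs i hi).1, (hs i hi).2.1, le_trans hS (hs i hi).2.2.1, le_trans (hs i hi).2.2.2 hT⟩⟩

/-- Lift a path of `A` in coordinate `j` to a path of `powSched A n`. -/
lemma PathIn.liftPow {A : Sched V} {n : ℕ} (i j : Fin n) (s : Fin n → V) (y : ℝ)
    (base : Fin n → V) (hup : ∀ k, j < k → s (k + i) = base k)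
    {aa bb : V} {S T : ℕ} (h : PathIn A (s (j + i)) y aa bb S T) (hbase : base j = aa) :
    PathIn (powSched A n) s ((((i : ℕ) : ℝ) + y) / (n : ℝ))
      (rot i base) (rot i (Function.update base j bb))
      (S + (j : ℕ) * tmax A) (T + (j : ℕ) * tmax A) := by
  obtain ⟨m, w, C, t, hw0, hwl, ht, hs⟩ := h
  refine ⟨m, fun l => rot i (Function.update base j (w l)),
    fun l => (fun z : ℝ => (((i : ℕ) : ℝ) + z) / (n : ℝ)) '' C l,
    fun l => t l + (j : ℕ) * tmax A, ?_, ?_, ?_, ?_⟩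
  · show rot i (Function.update base j (w 0)) = rot i base
    rw [hw0, ← hbase, Function.update_eq_self]
  · show rot i (Function.update base j (w m)) = _
    rw [hwl]
  · intro l l' hll hl'
    dsimp only
    have := ht l l' hll hl'
    omega
  · intro l hl
    obtain ⟨hmem, hxC, hSl, hTl⟩ := hs l hl
    refine ⟨?_, ⟨y, hxC, rfl⟩, by dsimp only; omega, by dsimp only; omega⟩
    refine ⟨i, j, s (j + i), w l, w (l + 1), C l, t l,
      (fun k => s (k + i)), Function.update base j (w l), hmem, rfl, ?_, ?_, ?_⟩
    · simp
    · intro k hk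
      rw [Function.update_of_ne (ne_of_gt hk)]
      exact hup k hk
    · rw [rot_unrot, Function.update_idem]

/-- `powSched A n` is an allgather schedule. -/
lemma isAllgather_pow {E : V → V → Prop} {A : Sched V} (hA : IsSched E A)
    (hAG : IsAllgather A) (n : ℕ) (hn : 1 ≤ n) : IsAllgather (powSched A n) := by
  intro s g hsg x hx
  obtain ⟨hx0, hx1⟩ := hx
  have hnR : (0 : ℝ) < n := by exact_mod_cast hn
  have hflt : ⌊x * n⌋₊ < n := by
    refine (Nat.floor_lt (by positivity)).mpr ?_
    nlinarith
  set i : Fin n := ⟨⌊x * n⌋₊, hflt⟩ with hi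
  set y : ℝ := x * n - ⌊x * n⌋₊ with hy
  have hy0 : 0 ≤ y := by
    rw [hy]
    have := Nat.floor_le (by positivity : (0:ℝ) ≤ x * n)
    have : ((i : ℕ) : ℝ) ≤ x * n := by exact_mod_cast this
    linarith
  have hy1 : y < 1 := by
    rw [hy]
    have := Nat.lt_floor_add_one (x * n)
    linarith
  have hxiy : x = (((i : ℕ) : ℝ) + y) / n := by
    show x = ((⌊x * n⌋₊ : ℝ) + y) / n
    rw [hy]; field_simp; ring
  set T := tmax A with hT
  set u' : Fin n → V := fun k => s (k + i) with hu'
  set g' : Fin n → V := fun k => g (k + i) with hg'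
  set st : ℕ → Fin n → V := fun r k => if (k : ℕ) < r then g' k else u' k with hst
  have key : ∀ r, r ≤ n →
      PathIn (powSched A n) s x (rot i (st 0)) (rot i (st r)) 1 (r * T) := by
    intro r
    induction r with
    | zero => intro _; exact PathIn.refl _ _ _ _ _
    | succ r ih =>
      intro hr
      have ihr := ih (by omega)
      have hrn : r < n := by omega
      set j : Fin n := ⟨r, hrn⟩ with hj
      have hjval : (j : ℕ) = r := rfl
      have hstep : Function.update (st r) j (g' j) = st (r + 1) := by
        funext k
        by_cases hk : k = j
        · rw [hk, Function.update_self]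
          show g' j = if (j : ℕ) < r + 1 then g' j else u' j
          rw [hjval, if_pos (by omega)]
        · rw [Function.update_of_ne hk]
          show (if (k : ℕ) < r then g' k else u' k) = if (k : ℕ) < r + 1 then g' k else u' k
          have : (k : ℕ) ≠ r := fun hc => hk (Fin.ext (by rw [hjval]; exact hc))
          by_cases hlt : (k : ℕ) < r
          · rw [if_pos hlt, if_pos (by omega)]
          · rw [if_neg hlt, if_neg (by omega)]
      have hbase : st r j = u' j := by
        show (if (j : ℕ) < r then g' j else u' j) = u' j
        rw [hjval, if_neg (by omega)]
      by_cases hcoord : u' j = g' j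
      · have heq : st (r + 1) = st r := by
          rw [← hstep, ← hcoord, ← hbase, Function.update_eq_self]
        rw [heq]
        refine ihr.mono (le_refl 1) ?_
        calc r * T ≤ r * T + T := by omega
          _ = (r + 1) * T := by ring
      · have hpa : PathIn A (s (j + i)) y (u' j) (g' j) 1 T :=
          pathIn_of_allgather hA hAG hcoord ⟨hy0, hy1⟩
        have hup : ∀ k, j < k → s (k + i) = st r k := by
          intro k hk
          rw [Fin.lt_def, hjval] at hk
          show s (k + i) = if (k : ℕ) < r then g' k else u' k
          rw [if_neg (by omega)]
        have hlift := hpa.liftPow i j s y (st r) hup hbase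
        rw [hstep, ← hxiy, hjval, ← hT] at hlift
        have hcomp := ihr.trans hlift (by omega) (by omega) (by omega)
        have harith : T + r * T = (r + 1) * T := by ring
        rwa [harith] at hcomp
  have hfin := key n (le_refl n)
  have h0 : st 0 = u' := by
    funext k; show (if (k : ℕ) < 0 then g' k else u' k) = u' k; rw [if_neg (by omega)]
  have hnn : st n = g' := by
    funext k; show (if (k : ℕ) < n then g' k else u' k) = g' k; rw [if_pos k.isLt]
  rw [h0, hnn, hu', hg', rot_unrot, rot_unrot] at hfin
  exact hfin.toWalk

end Aux

section Load
variable {V : Type*} [Finite V] {E : V → V → Prop} {A : Sched V}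

lemma loadSet_finite (hfin : A.Finite) (e : V × V) (t : ℕ) :
    {p : Tup V | p ∈ A ∧ p.2.2.1 = e ∧ p.2.2.2 = t}.Finite :=
  hfin.subset (fun p hp => hp.1)

lemma edgeLoad_eq_sum (hfin : A.Finite) (e : V × V) (t : ℕ) :
    edgeLoad A e t
      = ∑ p ∈ (loadSet_finite hfin e t).toFinset, (volume p.2.1).toReal := by
  have hcoe : {p : Tup V | p ∈ A ∧ p.2.2.1 = e ∧ p.2.2.2 = t}
      = ↑((loadSet_finite hfin e t).toFinset) := (Set.Finite.coe_toFinset _).symm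
  conv_lhs => rw [edgeLoad, hcoe, finsum_mem_coe_finset]

lemma edgeLoad_nonneg (hfin : A.Finite) (e : V × V) (t : ℕ) : 0 ≤ edgeLoad A e t := by
  rw [edgeLoad_eq_sum hfin]
  exact Finset.sum_nonneg fun p _ => ENNReal.toReal_nonneg

lemma img_finite (t : ℕ) :
    ((fun e => edgeLoad A e t) '' {e : V × V | E e.1 e.2}).Finite :=
  (Set.toFinite _).image _

lemma edgeLoad_le_sSup (hfin : A.Finite) {e : V × V} (he : E e.1 e.2) (t : ℕ) :
    edgeLoad A e t ≤ sSup ((fun e => edgeLoad A e t) '' {e : V × V | E e.1 e.2}) :=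
  le_csSup (img_finite t).bddAbove ⟨e, he, rfl⟩

lemma sSup_load_nonneg (hfin : A.Finite) (hne : ∃ u v, E u v) (t : ℕ) :
    0 ≤ sSup ((fun e => edgeLoad A e t) '' {e : V × V | E e.1 e.2}) := by
  obtain ⟨u, v, huv⟩ := hne
  exact le_trans (edgeLoad_nonneg hfin (u, v) t) (edgeLoad_le_sSup hfin huv t)

lemma exists_edge (hcard : 2 ≤ Nat.card V) (hA : IsSched E A) (hAG : IsAllgather A) :
    ∃ u v, E u v := by
  have : Nontrivial V := Finite.one_lt_card_iff_nontrivial.mp (by omega)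
  obtain ⟨u, v, huv⟩ := exists_pair_ne V
  obtain ⟨m, w, C, t, hw0, hwl, ht, hs⟩ := hAG u v huv 0 ⟨le_refl 0, one_pos⟩
  rcases Nat.eq_zero_or_pos m with hm | hm
  · subst hm
    exact absurd (hw0 ▸ hwl ▸ rfl : u = v) huv
  · have := (hs ⟨0, hm⟩).1
    exact ⟨_, _, (hA.2 _ this).1⟩

lemma d_pos (hcard : 2 ≤ Nat.card V) (hreg : IsRegular E d) (hA : IsSched E A)
    (hAG : IsAllgather A) : 0 < d := by
  obtain ⟨u, v, huv⟩ := exists_edge hcard hA hAG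
  rw [← (hreg u).1]
  exact Set.ncard_pos (Set.toFinite _) |>.mpr ⟨v, huv⟩

lemma sum_sSup_eq (hcard : 2 ≤ Nat.card V) {d : ℕ} (hreg : IsRegular E d)
    (hA : IsSched E A) (hAG : IsAllgather A)
    {M B : ℝ} (hM : 0 < M) (hB : 0 < B)
    (hopt : bwT E d M B A
      = (M / B) * (((Nat.card V : ℝ) - 1) / (Nat.card V : ℝ))) :
    ∑ t ∈ Finset.Icc 1 (tmax A),
        sSup ((fun e => edgeLoad A e t) '' {e : V × V | E e.1 e.2})
      = ((Nat.card V : ℝ) - 1) / d := by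
  have hd : 0 < d := d_pos hcard hreg hA hAG
  have hdR : (0 : ℝ) < d := by exact_mod_cast hd
  have hN : (0 : ℝ) < Nat.card V := by
    have : 0 < Nat.card V := by omega
    exact_mod_cast this
  have hsum : ((d : ℝ) / B) * (M / (Nat.card V : ℝ)) *
      (∑ t ∈ Finset.Icc 1 (tmax A),
        sSup ((fun e => edgeLoad A e t) '' {e : V × V | E e.1 e.2}))
      = (M / B) * (((Nat.card V : ℝ) - 1) / (Nat.card V : ℝ)) := by
    rw [bwT] at hopt
    simpa [stepT, Finset.mul_sum] using hopt
  set S := ∑ t ∈ Finset.Icc 1 (tmax A),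
      sSup ((fun e => edgeLoad A e t) '' {e : V × V | E e.1 e.2}) with hS
  field_simp at hsum ⊢
  nlinarith [hsum]

/-- In a bandwidth-optimal allgather schedule the underlying digraph has no self-loops. -/
lemma no_loops (hcard : 2 ≤ Nat.card V) {d : ℕ} (hreg : IsRegular E d)
    (hA : IsSched E A) (hAG : IsAllgather A)
    {M B : ℝ} (hM : 0 < M) (hB : 0 < B)
    (hopt : bwT E d M B A
      = (M / B) * (((Nat.card V : ℝ) - 1) / (Nat.card V : ℝ))) :
    ∀ v : V, ¬ E v v := by
  intro v hvv
  classical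
  have hfin := hA.1
  have hd : 0 < d := d_pos hcard hreg hA hAG
  have hdR : (0 : ℝ) < d := by exact_mod_cast hd
  set N := Nat.card V with hN
  have hNR : (2 : ℝ) ≤ N := by exact_mod_cast hcard
  set T := tmax A with hT
  -- the tuples with root u arriving at v from outside
  set S : V → Set (Tup V) :=
    fun u => {p : Tup V | p ∈ A ∧ p.1 = u ∧ p.2.2.1.2 = v ∧ p.2.2.1.1 ≠ v} with hSdef
  have hSfin : ∀ u, (S u).Finite := fun u => hfin.subset (fun p hp => hp.1)
  -- each root u ≠ v contributes at least a full shard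
  have hcover : ∀ u : V, u ≠ v → shard ⊆ ⋃ p ∈ S u, p.2.1 := by
    intro u huv x hx
    obtain ⟨m, w, C, t, hw0, hwl, ht, hs⟩ := pathIn_of_allgather hA hAG huv hx
    have harr : ∀ k, k ≤ m → w k = v → ∃ l, l < m ∧ w l ≠ v ∧ w (l + 1) = v := by
      intro k
      induction k with
      | zero => intro _ h0; rw [hw0] at h0; exact absurd h0 huv
      | succ k ih =>
        intro hk hkv
        by_cases h : w k = v
        · exact ih (by omega) h
        · exact ⟨k, by omega, h, hkv⟩
    obtain ⟨l, hl, hlv, hlv'⟩ := harr m (le_refl m) hwl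
    obtain ⟨hmem, hxC, _, _⟩ := hs l hl
    refine Set.mem_biUnion (?_ : (u, C l, (w l, w (l + 1)), t l) ∈ S u) hxC
    exact ⟨hmem, rfl, hlv', hlv⟩
  have hone : ∀ u : V, u ≠ v → 1 ≤ ∑ p ∈ (hSfin u).toFinset, (volume p.2.1).toReal := by
    intro u huv
    have hsub := hcover u huv
    have hvol1 : volume shard = 1 := by
      rw [shard, Real.volume_Ico]; norm_num
    have hle : (1 : ℝ≥0∞) ≤ ∑ p ∈ (hSfin u).toFinset, volume p.2.1 := by
      calc (1 : ℝ≥0∞) = volume shard := hvol1.symm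
        _ ≤ volume (⋃ p ∈ (hSfin u).toFinset, p.2.1) := by
            refine measure_mono ?_
            intro x hx
            have := hsub hx
            rw [Set.mem_iUnion₂] at this ⊢
            obtain ⟨p, hp, hxp⟩ := this
            exact ⟨p, (hSfin u).mem_toFinset.mpr hp, hxp⟩
        _ ≤ ∑ p ∈ (hSfin u).toFinset, volume p.2.1 := measure_biUnion_finset_le _ _
    have hfin' : ∀ p ∈ (hSfin u).toFinset, volume p.2.1 ≠ ∞ := by
      intro p hp
      have hpA : p ∈ A := ((hSfin u).mem_toFinset.mp hp).1
      have := (hA.2 p hpA).2.1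
      have hle2 : volume p.2.1 ≤ volume shard := measure_mono this
      rw [hvol1] at hle2
      exact (lt_of_le_of_lt hle2 (by norm_num)).ne
    have htR := ENNReal.toReal_mono
      (ENNReal.sum_ne_top.mpr hfin') hle
    rwa [ENNReal.toReal_one, ENNReal.toReal_sum hfin'] at htR
  -- sum over all roots u ≠ v
  have := Fintype.ofFinite V
  set L : ℕ → ℝ :=
    fun t => sSup ((fun e => edgeLoad A e t) '' {e : V × V | E e.1 e.2}) with hL
  have hLsum : ∑ t ∈ Finset.Icc 1 T, L t = ((N : ℝ) - 1) / d :=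
    sum_sSup_eq hcard hreg hA hAG hM hB hopt
  -- in-neighbours other than v
  set W : Set V := {w | E w v ∧ w ≠ v} with hW
  have hWcard : W.ncard = d - 1 := by
    have h1 : W = {w | E w v} \ {v} := by
      rw [hW]; ext w
      exact ⟨fun h => ⟨h.1, h.2⟩, fun h => ⟨h.1, h.2⟩⟩
    rw [h1, Set.ncard_diff_singleton_of_mem
      (show v ∈ {w | E w v} from hvv), (hreg v).2]
  -- assemble the counting bound
  have hfc : ∀ (e : V × V) (t : ℕ), (loadSet_finite hfin e t).toFinset
      = (loadSet_finite hfin e t).toFinset := fun _ _ => rfl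
  set Q : Finset (V × ℕ) := W.toFinite.toFinset ×ˢ Finset.Icc 1 T with hQ
  have hdisj1 : (↑(Finset.univ.erase v) : Set V).PairwiseDisjoint
      (fun u => (hSfin u).toFinset) := by
    intro u1 _ u2 _ hne
    rw [Function.onFun, Finset.disjoint_left]
    intro p hp1 hp2
    rw [Set.Finite.mem_toFinset] at hp1 hp2
    exact hne (hp1.2.1 ▸ hp2.2.1 ▸ rfl)
  have hdisj2 : (↑Q : Set (V × ℕ)).PairwiseDisjoint
      (fun q : V × ℕ => (loadSet_finite hfin (q.1, v) q.2).toFinset) := by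
    intro q1 _ q2 _ hne
    rw [Function.onFun, Finset.disjoint_left]
    intro p hp1 hp2
    rw [Set.Finite.mem_toFinset] at hp1 hp2
    refine hne ?_
    have e1 : q1.1 = p.2.2.1.1 := by rw [hp1.2.1]
    have e2 : q2.1 = p.2.2.1.1 := by rw [hp2.2.1]
    have e3 : q1.2 = q2.2 := by rw [← hp1.2.2, ← hp2.2.2]
    exact Prod.ext (e1.trans e2.symm) e3
  have hsubset : (Finset.univ.erase v).biUnion (fun u => (hSfin u).toFinset)
      ⊆ Q.biUnion (fun q : V × ℕ => (loadSet_finite hfin (q.1, v) q.2).toFinset) := by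
    intro p hp
    rw [Finset.mem_biUnion] at hp
    obtain ⟨u, hu, hpS⟩ := hp
    rw [Set.Finite.mem_toFinset] at hpS
    obtain ⟨hpA, hpu, hphead, hptail⟩ := hpS
    rw [Finset.mem_biUnion]
    refine ⟨(p.2.2.1.1, p.2.2.2), ?_, ?_⟩
    · rw [hQ, Finset.mem_product]
      constructor
      · rw [Set.Finite.mem_toFinset]
        exact ⟨hphead ▸ (hA.2 p hpA).1, hptail⟩
      · rw [Finset.mem_Icc]
        exact ⟨(hA.2 p hpA).2.2.2, time_le_tmax hfin hpA⟩
    · rw [Set.Finite.mem_toFinset]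
      exact ⟨hpA, Prod.ext rfl hphead, rfl⟩
  have step1 : ((Finset.univ.erase v).card : ℝ)
      ≤ ∑ u ∈ Finset.univ.erase v, ∑ p ∈ (hSfin u).toFinset, (volume p.2.1).toReal := by
    calc ((Finset.univ.erase v).card : ℝ)
        = ∑ u ∈ Finset.univ.erase v, (1 : ℝ) := by
          rw [Finset.sum_const, nsmul_eq_mul, mul_one]
      _ ≤ _ := Finset.sum_le_sum (fun u hu => hone u (Finset.ne_of_mem_erase hu))
  have step2 : ∑ u ∈ Finset.univ.erase v, ∑ p ∈ (hSfin u).toFinset, (volume p.2.1).toReal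
      ≤ ∑ q ∈ Q, edgeLoad A (q.1, v) q.2 := by
    rw [← Finset.sum_biUnion hdisj1]
    have hrhs : ∑ q ∈ Q, edgeLoad A (q.1, v) q.2
        = ∑ q ∈ Q, ∑ p ∈ (loadSet_finite hfin (q.1, v) q.2).toFinset,
            (volume p.2.1).toReal :=
      Finset.sum_congr rfl (fun q _ => edgeLoad_eq_sum hfin _ _)
    rw [hrhs, ← Finset.sum_biUnion hdisj2]
    exact Finset.sum_le_sum_of_subset_of_nonneg hsubset
      (fun p _ _ => ENNReal.toReal_nonneg)
  have hWc : (W.toFinite.toFinset.card : ℝ) = (d : ℝ) - 1 := by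
    rw [← Set.ncard_eq_toFinset_card W W.toFinite, hWcard]
    have hd1 : (1 : ℕ) ≤ d := hd
    push_cast [Nat.cast_sub hd1]
    ring
  have step3 : ∑ q ∈ Q, edgeLoad A (q.1, v) q.2
      ≤ ((d : ℝ) - 1) * (((N : ℝ) - 1) / d) := by
    have hQle : ∑ q ∈ Q, edgeLoad A (q.1, v) q.2 ≤ ∑ q ∈ Q, L q.2 := by
      refine Finset.sum_le_sum ?_
      intro q hq
      rw [hQ, Finset.mem_product, Set.Finite.mem_toFinset] at hq
      exact edgeLoad_le_sSup hfin hq.1.1 q.2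
    have hQsum : ∑ q ∈ Q, L q.2
        = (W.toFinite.toFinset.card : ℝ) * (((N : ℝ) - 1) / d) := by
      rw [hQ, Finset.sum_product]
      have hc : ∀ w ∈ W.toFinite.toFinset,
          ∑ t ∈ Finset.Icc 1 T, L t = ((N : ℝ) - 1) / d := fun _ _ => hLsum
      rw [Finset.sum_congr rfl hc, Finset.sum_const, nsmul_eq_mul]
    calc ∑ q ∈ Q, edgeLoad A (q.1, v) q.2 ≤ ∑ q ∈ Q, L q.2 := hQle
      _ = _ := by rw [hQsum, hWc]
  -- conclude
  have hcarde : (Finset.univ.erase v).card = N - 1 := by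
    rw [Finset.card_erase_of_mem (Finset.mem_univ v), Finset.card_univ, hN,
      Nat.card_eq_fintype_card]
  have hNcast : ((Finset.univ.erase v).card : ℝ) = (N : ℝ) - 1 := by
    rw [hcarde]
    have h1 : (1 : ℕ) ≤ N := by omega
    push_cast [Nat.cast_sub h1]
    ring
  have hchain := le_trans (le_trans step1 step2) step3
  rw [hNcast] at hchain
  have hpos : (0 : ℝ) < ((N : ℝ) - 1) / d := by
    apply div_pos <;> linarith
  have hlt : ((d : ℝ) - 1) * (((N : ℝ) - 1) / d) < (d : ℝ) * (((N : ℝ) - 1) / d) := by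
    apply mul_lt_mul_of_pos_right _ hpos
    linarith
  have heqd : (d : ℝ) * (((N : ℝ) - 1) / d) = (N : ℝ) - 1 := by
    field_simp
  linarith

end Load

section Pow
variable {V : Type*} [Finite V] {E : V → V → Prop} {A : Sched V}

lemma rot_injective {n : ℕ} (i : Fin n) : Function.Injective (rot (V := V) i) := by
  intro c c' h
  funext k
  have := congrFun h (k + i)
  simpa [rot, fin_add_sub_cancel] using this

lemma sc_injective {n : ℕ} (hn : 1 ≤ n) (i : Fin n) :
    Function.Injective (fun z : ℝ => (((i : ℕ) : ℝ) + z) / (n : ℝ)) := by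
  intro z z' h
  have hnR : (0 : ℝ) < n := by exact_mod_cast hn
  field_simp at h
  linarith

/-- Count of functions fixed on coordinates `≥ j`. -/
lemma card_fixed_above {n : ℕ} (j : Fin n) (b : Fin n → V) :
    Nat.card {g : Fin n → V // ∀ k : Fin n, (j : ℕ) ≤ (k : ℕ) → g k = b k}
      = Nat.card V ^ (j : ℕ) := by
  classical
  have e : {g : Fin n → V // ∀ k : Fin n, (j : ℕ) ≤ (k : ℕ) → g k = b k}
      ≃ ({k : Fin n // (k : ℕ) < (j : ℕ)} → V) := by
    refine ⟨fun g k => g.1 k.1,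
      fun h => ⟨fun k => if hk : (k : ℕ) < (j : ℕ) then h ⟨k, hk⟩ else b k,
      fun k hk => by dsimp only; rw [dif_neg (by omega)]⟩, ?_, ?_⟩
    · intro g
      apply Subtype.ext
      funext k
      dsimp only
      by_cases hk : (k : ℕ) < (j : ℕ)
      · rw [dif_pos hk]
      · rw [dif_neg hk]
        exact (g.2 k (by omega)).symm
    · intro h
      funext k
      dsimp only
      rw [dif_pos k.2]
  have e2 : {k : Fin n // (k : ℕ) < (j : ℕ)} ≃ Fin (j : ℕ) :=
    ⟨fun k => ⟨k.1, k.2⟩, fun l => ⟨⟨l.1, lt_trans l.2 j.isLt⟩, l.2⟩,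
      fun k => by ext; rfl, fun l => by ext; rfl⟩
  have e3 : Nat.card (Fin (j : ℕ)) = (j : ℕ) :=
    Nat.card_eq_fintype_card.trans (Fintype.card_fin _)
  rw [Nat.card_congr e, Nat.card_fun, Nat.card_congr e2, e3]

lemma sched_nonempty (hcard : 2 ≤ Nat.card V) (hAG : IsAllgather A) : A.Nonempty := by
  have : Nontrivial V := Finite.one_lt_card_iff_nontrivial.mp (by omega)
  obtain ⟨u, v, huv⟩ := exists_pair_ne V
  obtain ⟨m, w, C, t, hw0, hwl, ht, hs⟩ := hAG u v huv 0 ⟨le_refl 0, one_pos⟩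
  rcases Nat.eq_zero_or_pos m with hm | hm
  · subst hm
    exact absurd (hw0 ▸ hwl ▸ rfl : u = v) huv
  · exact ⟨_, (hs ⟨0, hm⟩).1⟩

lemma tmax_pos (hcard : 2 ≤ Nat.card V) (hA : IsSched E A) (hAG : IsAllgather A) :
    1 ≤ tmax A := by
  obtain ⟨p, hp, hpt⟩ := exists_time_eq_tmax hA.1 (sched_nonempty hcard hAG)
  rw [← hpt]
  exact (hA.2 p hp).2.2.2

lemma powSched_finite (hfin : A.Finite) (n : ℕ) : (powSched A n).Finite := by
  classical
  have hsub : powSched A n ⊆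
      (fun q : (Fin n × Fin n × Tup V × (Fin n → V) × (Fin n → V)) =>
        ((rot q.1 q.2.2.2.1,
          (fun x : ℝ => (((q.1 : ℕ) : ℝ) + x) / (n : ℝ)) '' q.2.2.1.2.1,
          (rot q.1 q.2.2.2.2,
            rot q.1 (Function.update q.2.2.2.2 q.2.1 q.2.2.1.2.2.1.2)),
          q.2.2.1.2.2.2 + (q.2.1 : ℕ) * tmax A) : Tup (Fin n → V))) ''
      ((Set.univ : Set (Fin n)) ×ˢ (Set.univ : Set (Fin n)) ×ˢ A ×ˢ
        (Set.univ : Set (Fin n → V)) ×ˢ (Set.univ : Set (Fin n → V))) := by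
    rintro p ⟨i, j, w, u, v, C, t, a, b, hq, ha, hb, hab, rfl⟩
    exact ⟨(i, j, (w, C, (u, v), t), a, b),
      ⟨Set.mem_univ _, Set.mem_univ _, hq, Set.mem_univ _, Set.mem_univ _⟩, rfl⟩
  exact (((Set.finite_univ).prod ((Set.finite_univ).prod
    (hfin.prod ((Set.finite_univ).prod Set.finite_univ)))).image _).subset hsub

lemma tmax_pow (hcard : 2 ≤ Nat.card V) (hA : IsSched E A) (hAG : IsAllgather A)
    {n : ℕ} (hn : 1 ≤ n) : tmax (powSched A n) = n * tmax A := by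
  classical
  have hfin := hA.1
  have hT1 := tmax_pos hcard hA hAG
  have hne := sched_nonempty hcard hAG
  -- upper bound
  have hbdd : {t' | ∃ p ∈ powSched A n, p.2.2.2 = t'}
      = (fun p : Tup (Fin n → V) => p.2.2.2) '' (powSched A n) := by
    ext t'; simp [Set.mem_image]
  have himgfin : {t' | ∃ p ∈ powSched A n, p.2.2.2 = t'}.Finite := by
    rw [hbdd]; exact (powSched_finite hfin n).image _
  have hub : ∀ t' ∈ {t' | ∃ p ∈ powSched A n, p.2.2.2 = t'}, t' ≤ n * tmax A := by
    rintro t' ⟨p, hp, rfl⟩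
    obtain ⟨i, j, w, u, v, C, t, a, b, hq, ha, hb, hab, rfl⟩ := hp
    have h1 : t ≤ tmax A := time_le_tmax hfin hq
    have h2 : (j : ℕ) ≤ n - 1 := by have := j.isLt; omega
    calc t + (j : ℕ) * tmax A ≤ tmax A + (n - 1) * tmax A := by
          exact Nat.add_le_add h1 (Nat.mul_le_mul_right _ h2)
      _ = n * tmax A := by
          have h3 : tmax A ≤ n * tmax A := Nat.le_mul_of_pos_left _ (by omega)
          have h4 : (n - 1) * tmax A = n * tmax A - tmax A := by
            rw [Nat.sub_one_mul]
          omega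
  -- attained
  obtain ⟨p0, hp0, hp0t⟩ := exists_time_eq_tmax hfin hne
  have hmem : n * tmax A ∈ {t' | ∃ p ∈ powSched A n, p.2.2.2 = t'} := by
    refine ⟨(rot ⟨0, by omega⟩ (fun k => if k = (⟨n - 1, by omega⟩ : Fin n) then p0.1 else p0.2.2.1.1),
      (fun x : ℝ => (((0 : ℕ) : ℝ) + x) / (n : ℝ)) '' p0.2.1,
      (rot ⟨0, by omega⟩ (fun _ => p0.2.2.1.1),
        rot ⟨0, by omega⟩ (Function.update (fun _ => p0.2.2.1.1) ⟨n - 1, by omega⟩ p0.2.2.1.2)),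
      p0.2.2.2 + (n - 1) * tmax A), ?_, ?_⟩
    · refine ⟨⟨0, by omega⟩, ⟨n - 1, by omega⟩, p0.1, p0.2.2.1.1, p0.2.2.1.2, p0.2.1, p0.2.2.2,
        _, _, ?_, if_pos rfl, rfl, ?_, rfl⟩
      · exact hp0
      · intro k hk
        rw [if_neg (Fin.ne_of_gt hk)]
    · dsimp only
      rw [hp0t]
      have h3 : tmax A ≤ n * tmax A := Nat.le_mul_of_pos_left _ (by omega)
      have h4 : (n - 1) * tmax A = n * tmax A - tmax A := by
        rw [Nat.sub_one_mul]
      omega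
  exact le_antisymm (csSup_le ⟨_, hmem⟩ hub) (le_csSup himgfin.bddAbove hmem)

/-- Unique decomposition of step indices. -/
lemma decomp_unique {T j t j' t' : ℕ} (h1 : 1 ≤ t) (h2 : t ≤ T) (h3 : 1 ≤ t') (h4 : t' ≤ T)
    (heq : t + j * T = t' + j' * T) : j = j' ∧ t = t' := by
  rcases lt_trichotomy j j' with h | h | h
  · have hle : (j + 1) * T ≤ j' * T := Nat.mul_le_mul_right T (by omega : j + 1 ≤ j')
    rw [add_mul, one_mul] at hle
    omega
  · subst h; exact ⟨rfl, by omega⟩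
  · have hle : (j' + 1) * T ≤ j * T := Nat.mul_le_mul_right T (by omega : j' + 1 ≤ j)
    rw [add_mul, one_mul] at hle
    omega

lemma volume_sc {n : ℕ} (hn : 1 ≤ n) (a : ℝ) (s : Set ℝ) :
    volume ((fun x : ℝ => (a + x) / n) '' s) = volume s / n := by
  have h1 : (fun x : ℝ => (a + x) / n) '' s = (a / n) +ᵥ ((n : ℝ)⁻¹ • s) := by
    ext y
    simp only [Set.mem_image, Set.mem_vadd_set, Set.mem_smul_set]
    constructor
    · rintro ⟨x, hx, rfl⟩
      refine ⟨(n : ℝ)⁻¹ * x, ⟨x, hx, rfl⟩, ?_⟩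
      show a / n + (n : ℝ)⁻¹ * x = _
      ring
    · rintro ⟨_, ⟨x, hx, rfl⟩, rfl⟩
      refine ⟨x, hx, ?_⟩
      show _ = a / n + (n : ℝ)⁻¹ * x
      ring
  have hn' : (0 : ℝ) < n := by exact_mod_cast hn
  rw [h1, measure_vadd, Measure.addHaar_smul]
  simp only [Module.finrank_self, pow_one, abs_inv, abs_of_pos hn',
    ENNReal.ofReal_inv_of_pos hn', ENNReal.ofReal_natCast]
  rw [ENNReal.div_eq_inv_mul]

/-- The key load computation: the load of a product edge at step `t + j·T` is
`N^j / n` times the load of the underlying edge of `G` at step `t`. -/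
lemma edgeLoad_pow (hA : IsSched E A) (hloop : ∀ v, ¬ E v v) {n : ℕ} (hn : 1 ≤ n)
    (p1 p2 : Fin n → V) (j0 : Fin n) (hE : E (p1 j0) (p2 j0))
    (hagree : ∀ k, k ≠ j0 → p1 k = p2 k)
    (j : Fin n) {t : ℕ} (ht1 : 1 ≤ t) (ht2 : t ≤ tmax A) :
    edgeLoad (powSched A n) (p1, p2) (t + (j : ℕ) * tmax A)
      = ((Nat.card V : ℝ) ^ (j : ℕ) / n) * edgeLoad A (p1 j0, p2 j0) t := by
  classical
  set T := tmax A with hTdef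
  set i : Fin n := j0 - j with hi
  have hji : j + i = j0 := by rw [hi, add_comm]; exact fin_sub_add_cancel j0 j
  set b : Fin n → V := fun k => p1 (k + i) with hbdef
  have hbj : b j = p1 j0 := congrArg p1 hji
  have hp12 : p1 j0 ≠ p2 j0 := fun h => hloop _ (h ▸ hE)
  set sc : ℝ → ℝ := fun z => (((i : ℕ) : ℝ) + z) / (n : ℝ) with hscdef
  set mix : Tup V → (Fin n → V) → (Fin n → V) :=
    fun q g => fun k => if k = j then q.1 else if (k : ℕ) < (j : ℕ) then g k else b k
    with hmixdef
  set Φ : Tup V × (Fin n → V) → Tup (Fin n → V) :=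
    fun qg => (rot i (mix qg.1 qg.2), sc '' qg.1.2.1, (p1, p2), t + (j : ℕ) * T)
    with hΦdef
  set AE : Set (Tup V) := {q | q ∈ A ∧ q.2.2.1 = (p1 j0, p2 j0) ∧ q.2.2.2 = t} with hAE
  set G : Set (Fin n → V) := {g | ∀ k : Fin n, (j : ℕ) ≤ (k : ℕ) → g k = b k} with hG
  have hrot1 : rot i b = p1 := rot_unrot i p1
  have hrot2 : rot i (Function.update b j (p2 j0)) = p2 := by
    funext k
    show Function.update b j (p2 j0) (k - i) = p2 k
    by_cases hk : k - i = j
    · have hk0 : k = j0 := by rw [← hji, ← hk, fin_sub_add_cancel]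
      rw [hk, Function.update_self, hk0]
    · rw [Function.update_of_ne hk]
      have hkj0 : k ≠ j0 := by
        intro hc; apply hk; rw [hc, ← hji, fin_add_sub_cancel]
      show p1 (k - i + i) = p2 k
      rw [fin_sub_add_cancel, hagree k hkj0]
  -- the load set is the injective image of `AE ×ˢ G` under `Φ`
  have hset : {p : Tup (Fin n → V) | p ∈ powSched A n ∧ p.2.2.1 = (p1, p2)
      ∧ p.2.2.2 = t + (j : ℕ) * T} = Φ '' (AE ×ˢ G) := by
    ext p
    constructor
    · rintro ⟨hpow, hpe, hpt⟩
      obtain ⟨i₁, j₁, w, u, v, C, t₁, a, b₁, hq, ha, hb, hab, rfl⟩ := hpow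
      have hpt' : t₁ + (j₁ : ℕ) * T = t + (j : ℕ) * T := hpt
      have ht₁1 : 1 ≤ t₁ := (hA.2 _ hq).2.2.2
      have ht₁2 : t₁ ≤ T := time_le_tmax hA.1 hq
      obtain ⟨hjj, htt⟩ := decomp_unique ht₁1 ht₁2 ht1 ht2 hpt'
      have hj₁ : j = j₁ := (Fin.ext hjj).symm
      subst hj₁
      have htt' : t = t₁ := htt.symm
      subst htt' 
      have hE' : E u v := (hA.2 _ hq).1
      have huv : u ≠ v := fun h => hloop v (h ▸ hE')
      have h1 : rot i₁ b₁ = p1 := congrArg Prod.fst hpe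
      have h2 : rot i₁ (Function.update b₁ j v) = p2 := congrArg Prod.snd hpe
      have hc1 : p1 (j + i₁) = u := by
        rw [← h1]
        show b₁ (j + i₁ - i₁) = u
        rw [fin_add_sub_cancel, hb]
      have hc2 : p2 (j + i₁) = v := by
        rw [← h2]
        show Function.update b₁ j v (j + i₁ - i₁) = v
        rw [fin_add_sub_cancel, Function.update_self]
      have hj0 : j + i₁ = j0 := by
        by_contra hc
        exact huv (hc1 ▸ hc2 ▸ hagree _ hc)
      have hii : i₁ = i := by
        rw [hi, ← hj0, add_comm j i₁, fin_add_sub_cancel]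
      have hb₁ : b₁ = b := by
        funext k
        have := congrFun h1 (k + i₁)
        show b₁ k = p1 (k + i)
        rw [← hii, ← this]
        show b₁ k = b₁ (k + i₁ - i₁)
        rw [fin_add_sub_cancel]
      have hu : u = p1 j0 := by rw [← hj0, hc1]
      have hv : v = p2 j0 := by rw [← hj0, hc2]
      refine ⟨((w, C, (u, v), t), fun k => if (k : ℕ) < (j : ℕ) then a k else b k),
        ⟨⟨hq, by rw [hu, hv], rfl⟩, ?_⟩, ?_⟩
      · intro k hk
        dsimp only
        rw [if_neg (by omega)]
      · have hmix : mix (w, C, (u, v), t) (fun k => if (k : ℕ) < (j : ℕ) then a k else b k)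
            = a := by
          funext k
          rw [hmixdef]
          dsimp only
          by_cases hkj : k = j
          · rw [if_pos hkj, hkj, ha]
          · rw [if_neg hkj]
            by_cases hlt : (k : ℕ) < (j : ℕ)
            · rw [if_pos hlt, if_pos hlt]
            · rw [if_neg hlt]
              have hgt : j < k := by
                rw [Fin.lt_def]
                rcases Nat.lt_or_ge (j : ℕ) (k : ℕ) with h | h
                · exact h
                · exact absurd (Fin.ext (by omega : (k : ℕ) = (j : ℕ))) hkj
              rw [← hb₁]
              exact (hab k hgt).symm
        rw [hΦdef]
        dsimp only
        rw [hmix, ← hii, ← h1, ← h2, hscdef]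
        rw [← hii, hTdef]
    · rintro ⟨⟨q, g⟩, ⟨⟨hqA, hqe, hqt⟩, hgG⟩, rfl⟩
      refine ⟨⟨i, j, q.1, p1 j0, p2 j0, q.2.1, t, mix q g, b, ?_, ?_, hbj, ?_, ?_⟩, rfl, rfl⟩
      · show (q.1, q.2.1, (p1 j0, p2 j0), t) ∈ A
        rw [← hqe, ← hqt]
        exact hqA
      · rw [hmixdef]
        dsimp only
        rw [if_pos rfl]
      · intro k hk
        rw [hmixdef]
        dsimp only
        rw [if_neg (Fin.ne_of_gt hk), if_neg (by rw [Fin.lt_def] at hk; omega)]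
      · rw [hΦdef]
        dsimp only
        rw [hrot1, hrot2, ← hqt]
  have hinj : Set.InjOn Φ (AE ×ˢ G) := by
    rintro ⟨q, g⟩ ⟨hqAE, hgG⟩ ⟨q', g'⟩ ⟨hq'AE, hg'G⟩ heq
    replace hqAE : q ∈ AE := hqAE
    replace hgG : g ∈ G := hgG
    replace hq'AE : q' ∈ AE := hq'AE
    replace hg'G : g' ∈ G := hg'G
    rw [hΦdef] at heq
    dsimp only at heq
    rw [Prod.mk.injEq, Prod.mk.injEq] at heq
    obtain ⟨e1, e2, -⟩ := heq
    have hmixeq : mix q g = mix q' g' := rot_injective i e1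
    have hCeq : q.2.1 = q'.2.1 := Set.image_injective.mpr (sc_injective hn i) e2
    have hroot : q.1 = q'.1 := by
      have := congrFun hmixeq j
      rw [hmixdef] at this
      simpa using this
    have hq4 : q = q' := by
      have h22 : q.2.2 = q'.2.2 := by
        refine Prod.ext ?_ ?_
        · rw [hqAE.2.1, hq'AE.2.1]
        · rw [hqAE.2.2, hq'AE.2.2]
      have h2 : q.2 = q'.2 := Prod.ext hCeq h22
      exact Prod.ext hroot h2
    have hgeq : g = g' := by
      funext k
      by_cases hk : (k : ℕ) < (j : ℕ)
      · have hkj : ¬ (k = j) := by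
          intro hc
          rw [hc] at hk
          exact lt_irrefl _ hk
        have := congrFun hmixeq k
        simp only [hmixdef, if_neg hkj, if_pos hk] at this
        exact this
      · rw [hgG k (by omega), hg'G k (by omega)]
    rw [hq4, hgeq]
  -- finiteness
  have hAEfin : AE.Finite := hA.1.subset (fun q hq => hq.1)
  have hGfin : G.Finite := Set.toFinite G
  have hprodfin : (AE ×ˢ G).Finite := hAEfin.prod hGfin
  -- compute
  have hnR : (0 : ℝ) < n := by exact_mod_cast hn
  rw [edgeLoad]
  rw [show {p : Tup (Fin n → V) | p ∈ powSched A n ∧ p.2.2.1 = (p1, p2)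
      ∧ p.2.2.2 = t + (j : ℕ) * T} = Φ '' (AE ×ˢ G) from hset]
  rw [finsum_mem_image hinj]
  have hterm : ∀ qg ∈ AE ×ˢ G,
      (volume (Φ qg).2.1).toReal = (volume qg.1.2.1).toReal / n := by
    rintro ⟨q, g⟩ ⟨hqAE, hgG⟩
    rw [hΦdef]
    dsimp only
    rw [hscdef]
    rw [volume_sc hn]
    rw [ENNReal.toReal_div]
    simp
  rw [finsum_mem_congr rfl hterm]
  have hcoe : AE ×ˢ G = ↑(hAEfin.toFinset ×ˢ hGfin.toFinset) := by
    rw [Finset.coe_product, Set.Finite.coe_toFinset, Set.Finite.coe_toFinset]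
  rw [hcoe, finsum_mem_coe_finset, Finset.sum_product]
  have hGcard : (hGfin.toFinset.card : ℝ) = (Nat.card V : ℝ) ^ (j : ℕ) := by
    have h1 : hGfin.toFinset.card = G.ncard := (Set.ncard_eq_toFinset_card G hGfin).symm
    have h2 : Nat.card G = G.ncard := Nat.card_coe_set_eq G
    have h3 : Nat.card G = Nat.card V ^ (j : ℕ) := card_fixed_above j b
    rw [h1, ← h2, h3]
    push_cast
    ring
  have hAEload : hAEfin.toFinset = (loadSet_finite hA.1 (p1 j0, p2 j0) t).toFinset := by
    ext p
    simp only [Set.Finite.mem_toFinset]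
    exact Iff.rfl
  have hfinal : ∑ x ∈ hAEfin.toFinset, ∑ y ∈ hGfin.toFinset,
      (volume (x, y).1.2.1).toReal / (n : ℝ)
      = ((Nat.card V : ℝ) ^ (j : ℕ) / n) * edgeLoad A (p1 j0, p2 j0) t := by
    have e1 : ∀ x ∈ hAEfin.toFinset, ∑ y ∈ hGfin.toFinset,
        (volume (x, y).1.2.1).toReal / (n : ℝ)
        = (hGfin.toFinset.card : ℝ) * ((volume x.2.1).toReal / n) := by
      intro q _
      dsimp only
      rw [Finset.sum_const, nsmul_eq_mul]
    rw [Finset.sum_congr rfl e1, ← Finset.mul_sum, hGcard, ← Finset.sum_div,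
      edgeLoad_eq_sum hA.1, ← hAEload]
    ring
  exact hfinal

lemma sSup_scale {S : Set ℝ} (hfin : S.Finite) (hne : S.Nonempty) {c : ℝ} (hc : 0 ≤ c) :
    sSup ((fun x => c * x) '' S) = c * sSup S := by
  have hgr : IsGreatest S (sSup S) :=
    ⟨hne.csSup_mem hfin, fun x hx => le_csSup hfin.bddAbove hx⟩
  refine IsGreatest.csSup_eq ⟨⟨sSup S, hgr.1, rfl⟩, ?_⟩
  rintro y ⟨x, hx, rfl⟩
  exact mul_le_mul_of_nonneg_left (hgr.2 hx) hc

lemma stepT_pow (hcard : 2 ≤ Nat.card V) {d : ℕ} (hreg : IsRegular E d)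
    (hA : IsSched E A) (hAG : IsAllgather A) (hloop : ∀ v, ¬ E v v)
    (M B : ℝ) {n : ℕ} (hn : 1 ≤ n) (j : Fin n) {t : ℕ} (ht1 : 1 ≤ t) (ht2 : t ≤ tmax A) :
    stepT (powE E n) (n * d) M B (powSched A n) (t + (j : ℕ) * tmax A)
      = (((n * d : ℕ) : ℝ) / B) * (M / (Nat.card (Fin n → V) : ℝ)) *
        (((Nat.card V : ℝ) ^ (j : ℕ) / n) *
          sSup ((fun e => edgeLoad A e t) '' {e : V × V | E e.1 e.2})) := by
  classical
  set c : ℝ := (Nat.card V : ℝ) ^ (j : ℕ) / n with hc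
  have hc0 : 0 ≤ c := by
    rw [hc]
    positivity
  have himg : (fun e => edgeLoad (powSched A n) e (t + (j : ℕ) * tmax A)) ''
        {e : (Fin n → V) × (Fin n → V) | powE E n e.1 e.2}
      = (fun x => c * x) '' ((fun e => edgeLoad A e t) '' {e : V × V | E e.1 e.2}) := by
    ext r
    constructor
    · rintro ⟨⟨q1, q2⟩, hq, rfl⟩
      obtain ⟨j0, hE0, hag⟩ := hq
      have hag' : ∀ k, k ≠ j0 → q1 k = q2 k := hag
      exact ⟨edgeLoad A (q1 j0, q2 j0) t, ⟨(q1 j0, q2 j0), hE0, rfl⟩,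
        (edgeLoad_pow hA hloop hn q1 q2 j0 hE0 hag' j ht1 ht2).symm⟩
    · rintro ⟨r', ⟨e, he, rfl⟩, rfl⟩
      refine ⟨(fun _ => e.1, Function.update (fun _ => e.1) j e.2), ?_, ?_⟩
      · refine ⟨j, ?_, ?_⟩
        · dsimp only
          rw [Function.update_self]
          exact he
        · intro k hk
          dsimp only
          rw [Function.update_of_ne hk]
      · have hupd := edgeLoad_pow hA hloop hn (fun _ => e.1)
          (Function.update (fun _ => e.1) j e.2) j
          (by rw [Function.update_self]; exact he)
          (fun k hk => (Function.update_of_ne hk e.2 (fun _ => e.1)).symm) j ht1 ht2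
        dsimp only
        rw [hupd, Function.update_self]
  rw [stepT, himg]
  obtain ⟨u0, v0, he0⟩ := exists_edge hcard hA hAG
  rw [sSup_scale ((Set.toFinite _).image _) ⟨edgeLoad A (u0, v0) t, (u0, v0), he0, rfl⟩ hc0]

end Pow



/-- Cartesian power expansion preserves bandwidth optimality: if `(G,A_G)`
is a bandwidth optimal allgather algorithm, then `(G^{□n}, A_{G^{□n}})` is a bandwidth
optimal allgather algorithm on `N^n` nodes. -/
theorem cartesian_power_bw_optimal {V : Type*} [Finite V]
    (E : V → V → Prop) (d : ℕ) (A : Sched V)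
    (hcard : 2 ≤ Nat.card V) (hreg : IsRegular E d) (hA : IsSched E A)
    (hAG : IsAllgather A)
    (M B : ℝ) (hM : 0 < M) (hB : 0 < B)
    (hopt : bwT E d M B A
      = (M / B) * (((Nat.card V : ℝ) - 1) / (Nat.card V : ℝ)))
    (n : ℕ) (hn : 1 ≤ n) :
    IsAllgather (powSched A n) ∧
    bwT (powE E n) (n * d) M B (powSched A n)
      = (M / B) * (((Nat.card V : ℝ) ^ n - 1) / (Nat.card V : ℝ) ^ n) := by
  classical
  have hloop : ∀ v, ¬ E v v := no_loops hcard hreg hA hAG hM hB hopt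
  refine ⟨isAllgather_pow hA hAG n hn, ?_⟩
  set N := Nat.card V with hN
  set T := tmax A with hT
  have hT1 : 1 ≤ T := tmax_pos hcard hA hAG
  have hd : 0 < d := d_pos hcard hreg hA hAG
  set L : ℕ → ℝ :=
    fun t => sSup ((fun e => edgeLoad A e t) '' {e : V × V | E e.1 e.2}) with hL
  have hLsum : ∑ t ∈ Finset.Icc 1 T, L t = ((N : ℝ) - 1) / d :=
    sum_sSup_eq hcard hreg hA hAG hM hB hopt
  have hNpow : (Nat.card (Fin n → V) : ℝ) = (N : ℝ) ^ n := by
    rw [Nat.card_fun]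
    have h1 : Nat.card (Fin n) = n := Nat.card_eq_fintype_card.trans (Fintype.card_fin _)
    rw [h1]
    push_cast
    ring
  have hterm : ∀ jt ∈ (Finset.range n ×ˢ Finset.Icc 1 T),
      stepT (powE E n) (n * d) M B (powSched A n) (jt.2 + jt.1 * T)
        = (((n * d : ℕ) : ℝ) / B) * (M / (N : ℝ) ^ n) *
          (((N : ℝ) ^ jt.1 / n) * L jt.2) := by
    rintro ⟨j', t⟩ hmem
    rw [Finset.mem_product, Finset.mem_range, Finset.mem_Icc] at hmem
    have hst := stepT_pow hcard hreg hA hAG hloop M B hn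
      (⟨j', hmem.1⟩ : Fin n) hmem.2.1 hmem.2.2
    rw [hNpow] at hst
    exact hst
  have hre : ∑ jt ∈ (Finset.range n ×ˢ Finset.Icc 1 T),
      stepT (powE E n) (n * d) M B (powSched A n) (jt.2 + jt.1 * T)
      = ∑ t' ∈ Finset.Icc 1 (n * T), stepT (powE E n) (n * d) M B (powSched A n) t' := by
    refine Finset.sum_nbij' (fun jt : ℕ × ℕ => jt.2 + jt.1 * T)
      (fun t' => ((t' - 1) / T, t' - ((t' - 1) / T) * T)) ?_ ?_ ?_ ?_ ?_
    · rintro ⟨j', t⟩ hmem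
      rw [Finset.mem_product, Finset.mem_range, Finset.mem_Icc] at hmem
      rw [Finset.mem_Icc]
      have h2 : (j' + 1) * T ≤ n * T := Nat.mul_le_mul_right T (by omega)
      rw [add_mul, one_mul] at h2
      dsimp only
      omega
    · intro t' hmem
      rw [Finset.mem_Icc] at hmem
      rw [Finset.mem_product, Finset.mem_range, Finset.mem_Icc]
      have hdm := Nat.div_add_mod (t' - 1) T
      have hmod : (t' - 1) % T < T := Nat.mod_lt _ (by omega)
      have hcomm : ((t' - 1) / T) * T = T * ((t' - 1) / T) := Nat.mul_comm _ _
      have hqn : (t' - 1) / T < n := by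
        rw [Nat.div_lt_iff_lt_mul (by omega : 0 < T)]
        have : t' - 1 < n * T := by omega
        calc t' - 1 < n * T := this
          _ = T * n := Nat.mul_comm _ _
          _ = n * T := Nat.mul_comm _ _
      refine ⟨hqn, ?_, ?_⟩ <;> dsimp only <;> omega
    · rintro ⟨j', t⟩ hmem
      rw [Finset.mem_product, Finset.mem_range, Finset.mem_Icc] at hmem
      have hdiv : (t + j' * T - 1) / T = j' := by
        have he : t + j' * T - 1 = (t - 1) + j' * T := by omega
        rw [he, Nat.add_mul_div_right _ _ (by omega : 0 < T),
          Nat.div_eq_of_lt (by omega), Nat.zero_add]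
      dsimp only
      rw [hdiv]
      simp only [Prod.mk.injEq]
      exact ⟨trivial, by omega⟩
    · intro t' hmem
      rw [Finset.mem_Icc] at hmem
      have hdm := Nat.div_add_mod (t' - 1) T
      have hcomm : ((t' - 1) / T) * T = T * ((t' - 1) / T) := Nat.mul_comm _ _
      dsimp only
      omega
    · intro a _
      rfl
  rw [bwT, tmax_pow hcard hA hAG hn, ← hT, ← hre, Finset.sum_congr rfl hterm,
    Finset.sum_product]
  have hinner : ∀ j' ∈ Finset.range n,
      ∑ t ∈ Finset.Icc 1 T, (((n * d : ℕ) : ℝ) / B) * (M / (N : ℝ) ^ n) *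
        (((N : ℝ) ^ j' / n) * L t)
      = (N : ℝ) ^ j' * ((((n * d : ℕ) : ℝ) / B) * (M / (N : ℝ) ^ n) / n * (((N : ℝ) - 1) / d)) := by
    intro j' _
    have h1 : ∀ t ∈ Finset.Icc 1 T, (((n * d : ℕ) : ℝ) / B) * (M / (N : ℝ) ^ n) *
        (((N : ℝ) ^ j' / n) * L t)
        = ((((n * d : ℕ) : ℝ) / B) * (M / (N : ℝ) ^ n) * ((N : ℝ) ^ j' / n)) * L t := by
      intro t _
      ring
    rw [Finset.sum_congr rfl h1, ← Finset.mul_sum, hLsum]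
    ring
  rw [Finset.sum_congr rfl hinner, ← Finset.sum_mul]
  have hN1 : (N : ℝ) ≠ 1 := by
    have : (2 : ℝ) ≤ N := by exact_mod_cast hcard
    linarith
  rw [geom_sum_eq hN1 n]
  have hNR : (2 : ℝ) ≤ N := by exact_mod_cast hcard
  have hdR : (0 : ℝ) < d := by exact_mod_cast hd
  have hnR : (0 : ℝ) < n := by exact_mod_cast hn
  have hNpos : (0 : ℝ) < N := by linarith
  have hNn : (0 : ℝ) < (N : ℝ) ^ n := by positivity
  have hNm1 : (N : ℝ) - 1 ≠ 0 := sub_ne_zero.mpr hN1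
  have hdne : (d : ℝ) ≠ 0 := ne_of_gt hdR
  have hnne : (n : ℝ) ≠ 0 := ne_of_gt hnR
  have hBne : B ≠ 0 := ne_of_gt hB
  have hNnne : ((N : ℝ) ^ n) ≠ 0 := ne_of_gt hNn
  push_cast
  field_simp


end Collective
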